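/- Let X denote the number of isolated vertices in the random bipartite graph G(N,N,p). Then P(X = 0) ≤ exp(-μ + Δp·log(1 + μ/(Δp))), where μ = 2N(1-p)^N and Δ = 2N²(1-p)^{2N-1}. -/

import Mathlib

open MeasureTheory

attribute [local instance] Classical.propDecidable

/-- The distribution of i.i.d. Bernoulli(p) indicators indexed by `α`:
the model of the random bipartite graph `G(N,N,p)` when `α = Fin N × Fin N`. -/
noncomputable def productBernoulli (α : Type) [Fintype α] [DecidableEq α] (p : ℝ) :
    Measure (α → Bool) :=
  ∑ f : α → Bool,
    (∏ a : α, if f a then ENNReal.ofReal p else ENNReal.ofReal (1 - p)) • Measure.dirac f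

/-- Adjacency in the bipartite graph on parts `V₁ = Fin N` (left) and `V₂ = Fin N` (right)
encoded by the cross-edge indicators `f`. -/
def adjB {N : ℕ} (f : Fin N × Fin N → Bool) : (Fin N ⊕ Fin N) → (Fin N ⊕ Fin N) → Prop
  | Sum.inl i, Sum.inr j => f (i, j) = true
  | Sum.inr j, Sum.inl i => f (i, j) = true
  | _, _ => False

/-- The number of isolated vertices of the bipartite graph encoded by `f` (as a real). -/
noncomputable def isoCount {N : ℕ} (f : Fin N × Fin N → Bool) : ℝ :=
  ∑ v : Fin N ⊕ Fin N, if ∀ w, ¬ adjB f v w then (1 : ℝ) else 0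

open Finset

namespace JansonBip

variable {N : ℕ} (p : ℝ)

abbrev Om (N : ℕ) := Fin N × Fin N → Bool

noncomputable def w (f : Om N) : ℝ := ∏ a, if f a then p else (1-p)

lemma w_nonneg (hp0 : 0 ≤ p) (hp1 : p ≤ 1) (f : Om N) : 0 ≤ w p f :=
  Finset.prod_nonneg fun a _ => by split_ifs <;> linarith

lemma w_pos (hp0 : 0 < p) (hp1 : p < 1) (f : Om N) : 0 < w p f :=
  Finset.prod_pos fun a _ => by split_ifs <;> linarith

lemma sum_w : ∑ f : Om N, w p f = 1 := by
  have h2 := Finset.prod_univ_sum (fun _ : Fin N × Fin N => (univ : Finset Bool))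
      (fun _ (b : Bool) => if b then p else (1-p))
  rw [Fintype.piFinset_univ] at h2
  have h3 : ∑ f : Om N, w p f = ∏ _i : Fin N × Fin N, ∑ b : Bool, (if b then p else (1-p)) := by
    rw [h2]; rfl
  rw [h3]
  simp

/-- flip coordinate a -/
def flipC (a : Fin N × Fin N) : Om N ≃ Om N where
  toFun f := Function.update f a (!f a)
  invFun f := Function.update f a (!f a)
  left_inv f := by
    funext b
    by_cases h : b = a
    · subst h; simp
    · simp [Function.update_of_ne h]
  right_inv f := by
    funext b
    by_cases h : b = a
    · subst h; simp
    · simp [Function.update_of_ne h]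

lemma w_update_true (a : Fin N × Fin N) (f : Om N) :
    w p (Function.update f a true) = p * ∏ b ∈ univ.erase a, (if f b then p else (1-p)) := by
  rw [w, ← Finset.mul_prod_erase univ _ (mem_univ a)]
  have h1 : (if Function.update f a true a = true then p else (1-p)) = p := by simp
  rw [h1]
  congr 1
  refine Finset.prod_congr rfl fun b hb => ?_
  rw [Function.update_of_ne (Finset.ne_of_mem_erase hb)]

lemma w_update_false (a : Fin N × Fin N) (f : Om N) :
    w p (Function.update f a false) = (1-p) * ∏ b ∈ univ.erase a, (if f b then p else (1-p)) := by
  rw [w, ← Finset.mul_prod_erase univ _ (mem_univ a)]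
  have h1 : (if Function.update f a false a = true then p else (1-p)) = (1-p) := by simp
  rw [h1]
  congr 1
  refine Finset.prod_congr rfl fun b hb => ?_
  rw [Function.update_of_ne (Finset.ne_of_mem_erase hb)]

/-- Single-coordinate averaging identity. -/
lemma avg (a : Fin N × Fin N) (F : Om N → ℝ) :
    ∑ f : Om N, w p f * F f
      = ∑ f : Om N, w p f *
          (p * F (Function.update f a true) + (1-p) * F (Function.update f a false)) := by
  have split : ∀ G : Om N → ℝ, ∑ f : Om N, G f
      = (∑ f : Om N, if f a then G f else 0) + ∑ f : Om N, if f a then 0 else G f := by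
    intro G
    rw [← Finset.sum_add_distrib]
    refine Finset.sum_congr rfl fun f _ => ?_
    by_cases h : f a <;> simp [h]
  have transport : ∀ G : Om N, (∑ f : Om N, if f a then (fun g => w p g * F g) f else 0) = 0 → True := fun _ _ => trivial
  clear transport
  rw [split, split (fun f => w p f * _)]
  have keyT : (∑ f : Om N, if f a then w p f * F f else 0)
      = ∑ f : Om N, if f a then 0 else
          w p (Function.update f a true) * F (Function.update f a true) := by
    rw [← Equiv.sum_comp (flipC a) (fun f => if f a then w p f * F f else 0)]
    refine Finset.sum_congr rfl fun f _ => ?_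
    by_cases h : f a
    · simp [flipC, h]
    · have h' : f a = false := by simp [h]
      simp [flipC, h']
  have keyT2 : (∑ f : Om N, if f a then
        w p f * (p * F (Function.update f a true) + (1-p) * F (Function.update f a false)) else 0)
      = ∑ f : Om N, if f a then 0 else
          w p (Function.update f a true) *
            (p * F (Function.update f a true) + (1-p) * F (Function.update f a false)) := by
    rw [← Equiv.sum_comp (flipC a) (fun f => if f a then w p f *
      (p * F (Function.update f a true) + (1-p) * F (Function.update f a false)) else 0)]
    refine Finset.sum_congr rfl fun f _ => ?_
    by_cases h : f a
    · simp [flipC, h]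
    · have h' : f a = false := by simp [h]
      have e2 : Function.update (Function.update f a true) a false = Function.update f a false :=
        Function.update_idem ..
      have e1 : Function.update (Function.update f a true) a true = Function.update f a true :=
        Function.update_idem ..
      simp only [flipC, Equiv.coe_fn_mk, h', Bool.not_false, e1, e2, Function.update_self]
      simp
  rw [keyT, keyT2, ← Finset.sum_add_distrib, ← Finset.sum_add_distrib]
  refine Finset.sum_congr rfl fun f _ => ?_
  by_cases h : f a
  · simp [h]
  · have h' : f a = false := by simp [h]
    simp only [h', if_false, Bool.false_eq_true]
    have huf : Function.update f a false = f := by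
      funext b
      by_cases hb : b = a
      · subst hb; simp [h']
      · simp [Function.update_of_ne hb]
    rw [w_update_true, huf]
    have hw : w p f = (1-p) * ∏ b ∈ univ.erase a, (if f b then p else (1-p)) := by
      rw [w, ← Finset.mul_prod_erase univ _ (mem_univ a), h']
      simp
    rw [hw]; ring

/-- zero out the coordinates in T -/
def zT (T : Finset (Fin N × Fin N)) (f : Om N) : Om N := fun a => if a ∈ T then false else f a

lemma zT_empty (f : Om N) : zT ∅ f = f := by funext a; simp [zT]

lemma zT_eq_self {T : Finset (Fin N × Fin N)} {f : Om N} (h : ∀ a ∈ T, f a = false) :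
    zT T f = f := by
  funext a
  by_cases ha : a ∈ T
  · simp [zT, ha, (h a ha).symm]
  · simp [zT, ha]

lemma zT_insert (a : Fin N × Fin N) (T : Finset (Fin N × Fin N)) (f : Om N) :
    zT (insert a T) f = zT T (Function.update f a false) := by
  funext b
  by_cases hb : b = a
  · subst hb
    by_cases hT : b ∈ T <;> simp [zT, hT]
  · by_cases hT : b ∈ T <;> simp [zT, hT, hb, Function.update_of_ne hb]

lemma zT_update_false (T : Finset (Fin N × Fin N)) (a : Fin N × Fin N) (f : Om N) :
    zT T (Function.update f a false) = Function.update (zT T f) a false := by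
  funext b
  by_cases hb : b = a
  · subst hb
    by_cases hT : b ∈ T <;> simp [zT, hT]
  · simp [zT, Function.update_of_ne hb]

/-- Conditioning on a zero pattern: the key independence lemma. -/
lemma zero_cond (T : Finset (Fin N × Fin N)) (F : Om N → ℝ) :
    ∑ f : Om N, w p f * ((if ∀ a ∈ T, f a = false then 1 else 0) * F (zT T f))
      = (1-p)^T.card * ∑ f : Om N, w p f * F (zT T f) := by
  induction T using Finset.induction_on generalizing F with
  | empty => simp
  | @insert a T ha ih =>
    rw [avg p a (fun f => (if ∀ b ∈ insert a T, f b = false then 1 else 0) * F (zT (insert a T) f))]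
    rw [avg p a (fun f => F (zT (insert a T) f))]
    have hupd_t : ∀ f : Om N, (if ∀ b ∈ insert a T, Function.update f a true b = false then (1:ℝ) else 0) = 0 := by
      intro f
      rw [if_neg]
      intro hall
      have := hall a (mem_insert_self a T)
      simp at this
    have hz : ∀ f : Om N, zT (insert a T) (Function.update f a false) = zT T (Function.update f a false) := by
      intro f
      rw [zT_insert, Function.update_idem]
    have hz_t : ∀ f : Om N, zT (insert a T) (Function.update f a true) = zT T (Function.update f a false) := by
      intro f
      rw [zT_insert, Function.update_idem]
    have hupd_f : ∀ f : Om N, (if ∀ b ∈ insert a T, Function.update f a false b = false then (1:ℝ) else 0)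
        = (if ∀ b ∈ T, f b = false then (1:ℝ) else 0) := by
      intro f
      congr 1
      apply propext
      constructor
      · intro hall b hb
        have := hall b (mem_insert_of_mem hb)
        rwa [Function.update_of_ne (fun he => ha (by rwa [he] at hb))] at this
      · intro hall b hb
        rcases mem_insert.mp hb with h | h
        · subst h; simp
        · rw [Function.update_of_ne (fun he => ha (by rwa [he] at h))]
          exact hall b h
    have step1 : ∑ f : Om N, w p f *
        (p * ((if ∀ b ∈ insert a T, Function.update f a true b = false then (1:ℝ) else 0) * F (zT (insert a T) (Function.update f a true)))
         + (1-p) * ((if ∀ b ∈ insert a T, Function.update f a false b = false then 1 else 0) * F (zT (insert a T) (Function.update f a false))))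
        = (1-p) * ∑ f : Om N, w p f * ((if ∀ b ∈ T, f b = false then 1 else 0) * F (Function.update (zT T f) a false)) := by
      rw [Finset.mul_sum]
      refine Finset.sum_congr rfl fun f _ => ?_
      rw [hupd_t, hupd_f, hz, zT_update_false]
      ring
    have step2 : ∑ f : Om N, w p f *
        (p * F (zT (insert a T) (Function.update f a true))
         + (1-p) * F (zT (insert a T) (Function.update f a false)))
        = ∑ f : Om N, w p f * F (Function.update (zT T f) a false) := by
      refine Finset.sum_congr rfl fun f _ => ?_
      rw [hz, hz_t, zT_update_false]
      ring
    rw [step1, step2, ih (fun g => F (Function.update g a false)),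
      Finset.card_insert_of_notMem ha, pow_succ]
    ring

section Comb

def rowZero (i : Fin N) (f : Om N) : Prop := ∀ j, f (i, j) = false
def colZero (j : Fin N) (f : Om N) : Prop := ∀ i, f (i, j) = false

noncomputable def nR (f : Om N) : ℕ := ∑ i, if rowZero i f then 1 else 0
noncomputable def nC (f : Om N) : ℕ := ∑ j, if colZero j f then 1 else 0
noncomputable def nn (f : Om N) : ℕ := nR f + nC f

def Ucol (i j : Fin N) (f : Om N) : Prop := ∀ i', i' ≠ i → f (i', j) = false
noncomputable def Yh (i : Fin N) (f : Om N) : ℕ := ∑ j, if Ucol i j f then 1 else 0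
noncomputable def Zh (i : Fin N) (f : Om N) : ℕ := ∑ i', if i' ≠ i ∧ rowZero i' f then 1 else 0

def Trow (i : Fin N) : Finset (Fin N × Fin N) := univ.filter (fun a => a.1 = i)
def Tco (i j : Fin N) : Finset (Fin N × Fin N) := univ.filter (fun a => a.2 = j ∧ a.1 ≠ i)

lemma mem_Trow {i : Fin N} {a : Fin N × Fin N} : a ∈ Trow i ↔ a.1 = i := by
  simp [Trow]

lemma mem_Tco {i j : Fin N} {a : Fin N × Fin N} : a ∈ Tco i j ↔ a.2 = j ∧ a.1 ≠ i := by
  simp [Tco]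

lemma card_Trow (i : Fin N) : (Trow i).card = N := by
  have : Trow i = {i} ×ˢ (univ : Finset (Fin N)) := by
    ext a
    simp [mem_Trow, Finset.mem_product, Prod.ext_iff]
    tauto
  rw [this, Finset.card_product]
  simp

lemma card_Tco (i j : Fin N) : (Tco i j).card = N - 1 := by
  have : Tco i j = ((univ : Finset (Fin N)).erase i) ×ˢ {j} := by
    ext a
    simp [mem_Tco, Finset.mem_product, Prod.ext_iff]
    tauto
  rw [this, Finset.card_product]
  simp [Finset.card_erase_of_mem]

-- zeroing preserves false entries
lemma zT_false {T : Finset (Fin N × Fin N)} {f : Om N} {a : Fin N × Fin N}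
    (h : f a = false) : zT T f a = false := by
  by_cases ha : a ∈ T <;> simp [zT, ha, h]

lemma rowZero_mono {T : Finset (Fin N × Fin N)} {f : Om N} {i : Fin N}
    (h : rowZero i f) : rowZero i (zT T f) := fun j => zT_false (h j)

lemma Ucol_mono {T : Finset (Fin N × Fin N)} {f : Om N} {i j : Fin N}
    (h : Ucol i j f) : Ucol i j (zT T f) := fun i' hi' => zT_false (h i' hi')

lemma Yh_mono (T : Finset (Fin N × Fin N)) (f : Om N) (i : Fin N) :
    Yh i f ≤ Yh i (zT T f) := by
  refine Finset.sum_le_sum fun j _ => ?_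
  split_ifs with h1 h2
  · exact le_refl _
  · exact absurd (Ucol_mono h1) h2
  all_goals simp

lemma Zh_mono (T : Finset (Fin N × Fin N)) (f : Om N) (i : Fin N) :
    Zh i f ≤ Zh i (zT T f) := by
  refine Finset.sum_le_sum fun i' _ => ?_
  split_ifs with h1 h2
  · exact le_refl _
  · exact absurd ⟨h1.1, rowZero_mono h1.2⟩ h2
  all_goals simp

-- properties of zeroing row i
lemma zTrow_rowZero_self (i : Fin N) (f : Om N) : rowZero i (zT (Trow i) f) := by
  intro j
  simp [zT, mem_Trow]

lemma zTrow_rowZero_other {i i' : Fin N} (h : i' ≠ i) (f : Om N) :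
    rowZero i' (zT (Trow i) f) ↔ rowZero i' f := by
  unfold rowZero
  constructor <;> intro hall j <;> have := hall j <;>
    simpa [zT, mem_Trow, h] using this

lemma zTrow_colZero {i j : Fin N} (f : Om N) :
    colZero j (zT (Trow i) f) ↔ Ucol i j f := by
  constructor
  · intro hall i' hi'
    have := hall i'
    simpa [zT, mem_Trow, hi'] using this
  · intro hU i'
    by_cases hi' : i' = i
    · subst hi'; simp [zT, mem_Trow]
    · simpa [zT, mem_Trow, hi'] using hU i' hi'

lemma zTrow_Ucol {i j : Fin N} (f : Om N) :
    Ucol i j (zT (Trow i) f) ↔ Ucol i j f := by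
  constructor
  · intro hall i' hi'
    have := hall i' hi'
    simpa [zT, mem_Trow, hi'] using this
  · intro hU i' hi'
    simpa [zT, mem_Trow, hi'] using hU i' hi'

lemma nn_zTrow (i : Fin N) (f : Om N) :
    nn (zT (Trow i) f) = 1 + Yh i f + Zh i f := by
  have hR : nR (zT (Trow i) f) = 1 + Zh i f := by
    unfold nR Zh
    have : ∀ i' : Fin N, (if rowZero i' (zT (Trow i) f) then (1:ℕ) else 0)
        = (if i' = i then 1 else 0) + (if i' ≠ i ∧ rowZero i' f then 1 else 0) := by
      intro i'
      by_cases hi' : i' = i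
      · simp [hi', zTrow_rowZero_self]
      · rw [if_neg hi', zero_add]
        rw [if_congr (Iff.and (iff_of_true hi' hi') (zTrow_rowZero_other hi' f)).symm rfl rfl]
        congr 1
        simp [hi']
    rw [Finset.sum_congr rfl (fun i' _ => this i'), Finset.sum_add_distrib]
    congr 1
    simp
  have hC : nC (zT (Trow i) f) = Yh i f := by
    unfold nC Yh
    exact Finset.sum_congr rfl fun j _ => if_congr (zTrow_colZero f) rfl rfl
  unfold nn
  rw [hR, hC]
  omega

-- properties of zeroing column j off row i
lemma zTco_Ucol_self (i j : Fin N) (f : Om N) : Ucol i j (zT (Tco i j) f) := by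
  intro i' hi'
  simp [zT, mem_Tco, hi']

lemma colZero_iff_Ucol (i j : Fin N) (f : Om N) :
    colZero j f ↔ Ucol i j f ∧ f (i, j) = false := by
  constructor
  · exact fun h => ⟨fun i' _ => h i', h i⟩
  · rintro ⟨hU, hij⟩ i'
    by_cases hi' : i' = i
    · subst hi'; exact hij
    · exact hU i' hi'

lemma Zh_le_nR (i : Fin N) (f : Om N) : Zh i f ≤ nR f := by
  refine Finset.sum_le_sum fun i' _ => ?_
  split_ifs with h1 h2
  · exact le_refl _
  · exact absurd h1.2 h2
  all_goals simp

-- update lemmas (changing an entry in row i)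
lemma rowZero_update {i i' j : Fin N} (h : i' ≠ i) (f : Om N) (x : Bool) :
    rowZero i' (Function.update f (i, j) x) ↔ rowZero i' f := by
  unfold rowZero
  have hne : ∀ j' : Fin N, ((i', j') : Fin N × Fin N) ≠ (i, j) := by
    intro j'
    simp [Prod.ext_iff]
    intro he
    exact absurd he h
  constructor
  · intro hall j'
    have := hall j'
    rwa [Function.update_of_ne (hne j')] at this
  · intro hall j'
    rw [Function.update_of_ne (hne j')]
    exact hall j' 

lemma Ucol_update (i j j' : Fin N) (f : Om N) (x : Bool) :
    Ucol i j' (Function.update f (i, j) x) ↔ Ucol i j' f := by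
  unfold Ucol
  have hne : ∀ i'' : Fin N, i'' ≠ i → ((i'', j') : Fin N × Fin N) ≠ (i, j) := by
    intro i'' hi''
    simp [Prod.ext_iff]
    intro he
    exact absurd he hi''
  constructor
  · intro hall i' hi'
    have := hall i' hi'
    rwa [Function.update_of_ne (hne i' hi')] at this
  · intro hall i' hi'
    rw [Function.update_of_ne (hne i' hi')]
    exact hall i' hi' 

lemma Zh_update (i j : Fin N) (f : Om N) (x : Bool) :
    Zh i (Function.update f (i, j) x) = Zh i f := by
  unfold Zh
  refine Finset.sum_congr rfl fun i' _ => ?_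
  by_cases hi' : i' = i
  · simp [hi']
  · exact if_congr (Iff.and Iff.rfl (rowZero_update hi' f x)) rfl rfl

lemma Yh_update (i j : Fin N) (f : Om N) (x : Bool) :
    Yh i (Function.update f (i, j) x) = Yh i f := by
  unfold Yh
  exact Finset.sum_congr rfl fun j' _ => if_congr (Ucol_update i j j' f x) rfl rfl

end Comb

section Analytic

variable (N : ℕ) (p t : ℝ)

noncomputable def Ff : ℝ := ∑ f : Om N, w p f * t ^ nn f
noncomputable def Gf (i : Fin N) : ℝ := ∑ f : Om N, w p f * t ^ (Yh i f + Zh i f)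
noncomputable def Hf (i : Fin N) : ℝ :=
  ∑ f : Om N, w p f * ((p + (1-p)*t) ^ Yh i f * t ^ Zh i f)
noncomputable def Hf' (i : Fin N) : ℝ :=
  ∑ f : Om N, w p f * ((p + (1-p)*t) ^ (Yh i f - 1) * t ^ Zh i f)

variable {N p t}

/-- S2 : conditioning on row i being zero. -/
lemma cond_row (i : Fin N) :
    ∑ f : Om N, w p f * ((if rowZero i f then 1 else 0) * t ^ (nn f - 1))
      = (1-p)^N * Gf N p t i := by
  have hiff : ∀ f : Om N, rowZero i f ↔ ∀ a ∈ Trow i, f a = false := by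
    intro f
    constructor
    · intro h a ha
      rw [mem_Trow] at ha
      have := h a.2
      rwa [← ha] at this
    · intro h j
      exact h (i, j) (mem_Trow.mpr rfl)
  have h1 : ∑ f : Om N, w p f * ((if rowZero i f then 1 else 0) * t ^ (nn f - 1))
      = ∑ f : Om N, w p f * ((if ∀ a ∈ Trow i, f a = false then 1 else 0)
          * t ^ (nn (zT (Trow i) f) - 1)) := by
    refine Finset.sum_congr rfl fun f _ => ?_
    by_cases h : rowZero i f
    · rw [if_pos h, if_pos ((hiff f).mp h), zT_eq_self ((hiff f).mp h)]
    · rw [if_neg h, if_neg (fun hh => h ((hiff f).mpr hh))]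
      simp
  rw [h1, zero_cond p (Trow i) (fun g => t ^ (nn g - 1)), card_Trow]
  congr 1
  refine Finset.sum_congr rfl fun f _ => ?_
  rw [nn_zTrow]
  congr 2
  omega

/-- inner step of S3 : averaging out the entries of row i. -/
lemma avg_row (hp0 : 0 < p) (hp1 : p < 1) (i : Fin N) (J : Finset (Fin N)) :
    ∑ f : Om N, w p f * (t ^ Zh i f *
        ∏ j, (if j ∈ J then t ^ (if Ucol i j f ∧ f (i, j) = false then 1 else 0)
          else (p + (1-p)*t) ^ (if Ucol i j f then 1 else 0)))
      = Hf N p t i := by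
  induction J using Finset.induction_on with
  | empty =>
    unfold Hf Yh
    refine Finset.sum_congr rfl fun f _ => ?_
    congr 1
    simp only [Finset.notMem_empty, if_false]
    rw [Finset.prod_pow_eq_pow_sum, mul_comm]
  | @insert j₀ J hj ih =>
    rw [avg p (i, j₀) (fun f => t ^ Zh i f *
        ∏ j, (if j ∈ insert j₀ J then t ^ (if Ucol i j f ∧ f (i, j) = false then 1 else 0)
          else (p + (1-p)*t) ^ (if Ucol i j f then 1 else 0)))]
    rw [← ih]
    refine Finset.sum_congr rfl fun f _ => ?_
    congr 1
    -- pointwise computation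
    have hent : ∀ (x : Bool) (j : Fin N), j ≠ j₀ →
        Function.update f (i, j₀) x (i, j) = f (i, j) := by
      intro x j hjj
      refine Function.update_of_ne ?_ x f
      simp [Prod.ext_iff]
      intro h
      exact absurd h hjj
    have hprod : ∀ x : Bool,
        t ^ Zh i (Function.update f (i, j₀) x) *
          ∏ j, (if j ∈ insert j₀ J then t ^ (if Ucol i j (Function.update f (i, j₀) x) ∧ Function.update f (i, j₀) x (i, j) = false then 1 else 0)
            else (p + (1-p)*t) ^ (if Ucol i j (Function.update f (i, j₀) x) then 1 else 0))
        = t ^ Zh i f * ((if Ucol i j₀ f ∧ x = false then t else 1) *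
            ∏ j ∈ univ.erase j₀, (if j ∈ J then t ^ (if Ucol i j f ∧ f (i, j) = false then 1 else 0)
              else (p + (1-p)*t) ^ (if Ucol i j f then 1 else 0))) := by
      intro x
      rw [Zh_update]
      congr 1
      rw [← Finset.mul_prod_erase univ _ (mem_univ j₀)]
      congr 1
      · rw [if_pos (mem_insert_self j₀ J), Ucol_update, Function.update_self]
        by_cases hU : Ucol i j₀ f
        · by_cases hx : x = false
          · rw [if_pos ⟨hU, hx⟩, if_pos ⟨hU, hx⟩, pow_one]
          · rw [if_neg (fun hc => hx hc.2), if_neg (fun hc => hx hc.2), pow_zero]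
        · rw [if_neg (fun hc => hU hc.1), if_neg (fun hc => hU hc.1), pow_zero]
      · refine Finset.prod_congr rfl fun j hjmem => ?_
        have hjne : j ≠ j₀ := Finset.ne_of_mem_erase hjmem
        rw [Ucol_update, hent x j hjne]
        have hmem : (j ∈ insert j₀ J) ↔ j ∈ J := by
          rw [Finset.mem_insert]
          exact ⟨fun h => h.elim (fun h => absurd h hjne) id, Or.inr⟩
        exact if_congr hmem rfl rfl
    rw [hprod true, hprod false]
    have hJform : (t ^ Zh i f *
          ∏ j, (if j ∈ J then t ^ (if Ucol i j f ∧ f (i, j) = false then 1 else 0)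
            else (p + (1-p)*t) ^ (if Ucol i j f then 1 else 0)))
        = t ^ Zh i f * ((p + (1-p)*t) ^ (if Ucol i j₀ f then 1 else 0) *
            ∏ j ∈ univ.erase j₀, (if j ∈ J then t ^ (if Ucol i j f ∧ f (i, j) = false then 1 else 0)
              else (p + (1-p)*t) ^ (if Ucol i j f then 1 else 0))) := by
      congr 1
      rw [← Finset.mul_prod_erase univ _ (mem_univ j₀)]
      congr 1
      rw [if_neg hj]
    rw [hJform]
    by_cases hU : Ucol i j₀ f
    · rw [if_neg (fun hc => by simpa using hc.2), if_pos ⟨hU, rfl⟩, if_pos hU, pow_one]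
      ring
    · rw [if_neg (fun hc => hU hc.1), if_neg (fun hc => hU hc.1), if_neg hU, pow_zero]
      ring

/-- S3 : F ≤ H. -/
lemma F_le_H (hp0 : 0 < p) (hp1 : p < 1) (ht0 : 0 < t) (ht1 : t ≤ 1) (i : Fin N) :
    Ff N p t ≤ Hf N p t i := by
  rw [← avg_row hp0 hp1 i univ]
  unfold Ff
  refine Finset.sum_le_sum fun f _ => ?_
  refine mul_le_mul_of_nonneg_left ?_ (w_nonneg p hp0.le hp1.le f)
  have hsimp : (t ^ Zh i f *
      ∏ j, (if j ∈ (univ : Finset (Fin N)) then t ^ (if Ucol i j f ∧ f (i, j) = false then 1 else 0)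
        else (p + (1-p)*t) ^ (if Ucol i j f then 1 else 0)))
      = t ^ (Zh i f + ∑ j, if Ucol i j f ∧ f (i, j) = false then 1 else 0) := by
    rw [pow_add]
    congr 1
    rw [← Finset.prod_pow_eq_pow_sum]
    refine Finset.prod_congr rfl fun j _ => ?_
    rw [if_pos (mem_univ j)]
  rw [hsimp]
  refine pow_le_pow_of_le_one ht0.le ht1 ?_
  have h1 : Zh i f ≤ nR f := Zh_le_nR i f
  have h2 : (∑ j, if Ucol i j f ∧ f (i, j) = false then (1:ℕ) else 0) = nC f := by
    unfold nC
    exact Finset.sum_congr rfl fun j _ => (if_congr (colZero_iff_Ucol i j f) rfl rfl).symm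
  rw [h2] at *
  unfold nn
  omega

lemma pow_sub_pow_le' {x u : ℝ} (h0 : 0 ≤ u) (hx : u ≤ x) (y : ℕ) :
    x ^ y - u ^ y ≤ y * (x - u) * x ^ (y - 1) := by
  induction y with
  | zero => simp
  | succ y ih =>
    have hx0 : 0 ≤ x := le_trans h0 hx
    have hux : u ^ y ≤ x ^ y := pow_le_pow_left₀ h0 hx y
    have hid : x ^ (y+1) - u ^ (y+1) = x * (x ^ y - u ^ y) + u ^ y * (x - u) := by ring
    rcases Nat.eq_zero_or_pos y with hy | hy
    · subst hy; simp
    · have hxy : x * (x ^ y - u ^ y) ≤ x * (y * (x - u) * x ^ (y-1)) := by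
        refine mul_le_mul_of_nonneg_left ih hx0
      have hpow : x * (y * (x - u) * x ^ (y-1)) = y * (x - u) * x ^ y := by
        rw [mul_comm x _, mul_assoc]
        congr 1
        rw [← pow_succ]
        congr 1
        omega
      have h2 : u ^ y * (x - u) ≤ x ^ y * (x - u) :=
        mul_le_mul_of_nonneg_right hux (by linarith)
      have hthis : ((y:ℝ)+1) * (x - u) * x ^ y = y * (x-u) * x ^ y + x ^ y * (x - u) := by
        ring
      rw [hid]
      push_cast
      rw [hthis]
      linarith [hxy.trans_eq hpow]

variable (N p t) in
noncomputable def Kf (i : Fin N) : ℝ :=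
  ∑ f : Om N, w p f * ((Yh i f : ℝ) * ((p + (1-p)*t) ^ (Yh i f - 1) * t ^ Zh i f))

/-- S4 : the covariance-correction bound, per column. -/
lemma cond_co (hp0 : 0 < p) (hp1 : p < 1) (ht0 : 0 < t) (ht1 : t ≤ 1) (i j : Fin N) :
    ∑ f : Om N, w p f * ((if Ucol i j f then 1 else 0) *
        ((p + (1-p)*t) ^ (Yh i f - 1) * t ^ Zh i f))
      ≤ (1-p)^(N-1) * Hf' N p t i := by
  have hx0 : 0 < p + (1-p)*t := by nlinarith
  have hx1 : p + (1-p)*t ≤ 1 := by nlinarith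
  have hiff : ∀ f : Om N, Ucol i j f ↔ ∀ a ∈ Tco i j, f a = false := by
    intro f
    constructor
    · intro h a ha
      rw [mem_Tco] at ha
      have := h a.1 ha.2
      rw [← ha.1] at this
      rwa [Prod.mk.eta] at this
    · intro h i' hi'
      exact h (i', j) (mem_Tco.mpr ⟨rfl, hi'⟩)
  have h1 : ∑ f : Om N, w p f * ((if Ucol i j f then 1 else 0) *
        ((p + (1-p)*t) ^ (Yh i f - 1) * t ^ Zh i f))
      = ∑ f : Om N, w p f * ((if ∀ a ∈ Tco i j, f a = false then 1 else 0) *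
          ((p + (1-p)*t) ^ (Yh i (zT (Tco i j) f) - 1) * t ^ Zh i (zT (Tco i j) f))) := by
    refine Finset.sum_congr rfl fun f _ => ?_
    by_cases h : Ucol i j f
    · rw [if_pos h, if_pos ((hiff f).mp h), zT_eq_self ((hiff f).mp h)]
    · rw [if_neg h, if_neg (fun hh => h ((hiff f).mpr hh))]
      simp
  rw [h1, zero_cond p (Tco i j)
    (fun g => (p + (1-p)*t) ^ (Yh i g - 1) * t ^ Zh i g), card_Tco]
  refine mul_le_mul_of_nonneg_left ?_ (pow_nonneg (by linarith) _)
  unfold Hf'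
  refine Finset.sum_le_sum fun f _ => ?_
  refine mul_le_mul_of_nonneg_left ?_ (w_nonneg p hp0.le hp1.le f)
  refine mul_le_mul ?_ ?_ (by positivity) (by positivity)
  · exact pow_le_pow_of_le_one hx0.le hx1 (Nat.sub_le_sub_right (Yh_mono _ f i) 1)
  · exact pow_le_pow_of_le_one ht0.le ht1 (Zh_mono _ f i)

lemma H_sub_G (hp0 : 0 < p) (hp1 : p < 1) (ht0 : 0 < t) (ht1 : t ≤ 1) (i : Fin N) :
    Hf N p t i - Gf N p t i ≤ p * (1-t) * Kf N p t i := by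
  have hx0 : 0 < p + (1-p)*t := by nlinarith
  unfold Hf Gf Kf
  rw [← Finset.sum_sub_distrib, Finset.mul_sum]
  refine Finset.sum_le_sum fun f _ => ?_
  have hw := w_nonneg p hp0.le hp1.le f
  have htx : t ≤ p + (1-p)*t := by nlinarith
  have hkey := pow_sub_pow_le' ht0.le htx (Yh i f)
  have htz : (0:ℝ) ≤ t ^ Zh i f := by positivity
  have hpa : t ^ (Yh i f + Zh i f) = t ^ Yh i f * t ^ Zh i f := pow_add t _ _
  have hd : (p + (1-p)*t) - t = p * (1-t) := by ring
  rw [hd] at hkey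
  calc w p f * ((p + (1-p)*t) ^ Yh i f * t ^ Zh i f) - w p f * t ^ (Yh i f + Zh i f)
      = w p f * (((p + (1-p)*t) ^ Yh i f - t ^ Yh i f) * t ^ Zh i f) := by
        rw [hpa]; ring
    _ ≤ w p f * ((Yh i f * (p * (1-t)) * (p + (1-p)*t) ^ (Yh i f - 1)) * t ^ Zh i f) := by
        refine mul_le_mul_of_nonneg_left (mul_le_mul_of_nonneg_right hkey htz) hw
    _ = p * (1-t) * (w p f * (Yh i f * ((p + (1-p)*t) ^ (Yh i f - 1) * t ^ Zh i f))) := by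
        ring

lemma K_le (hp0 : 0 < p) (hp1 : p < 1) (ht0 : 0 < t) (ht1 : t ≤ 1) (i : Fin N) :
    Kf N p t i ≤ N * ((1-p)^(N-1) * Hf' N p t i) := by
  have h1 : Kf N p t i = ∑ j, ∑ f : Om N, w p f * ((if Ucol i j f then 1 else 0) *
      ((p + (1-p)*t) ^ (Yh i f - 1) * t ^ Zh i f)) := by
    unfold Kf
    rw [Finset.sum_comm]
    refine Finset.sum_congr rfl fun f _ => ?_
    rw [← Finset.mul_sum, ← Finset.sum_mul]
    congr 2
    unfold Yh
    push_cast
    rfl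
  rw [h1]
  calc ∑ j : Fin N, ∑ f : Om N, w p f * ((if Ucol i j f then 1 else 0) *
        ((p + (1-p)*t) ^ (Yh i f - 1) * t ^ Zh i f))
      ≤ ∑ _j : Fin N, (1-p)^(N-1) * Hf' N p t i :=
        Finset.sum_le_sum fun j _ => cond_co hp0 hp1 ht0 ht1 i j
    _ = N * ((1-p)^(N-1) * Hf' N p t i) := by
        rw [Finset.sum_const, card_univ]
        simp [nsmul_eq_mul]

lemma xH'_le_H (hp0 : 0 < p) (hp1 : p < 1) (ht0 : 0 < t) (ht1 : t ≤ 1) (i : Fin N) :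
    (p + (1-p)*t) * Hf' N p t i ≤ Hf N p t i := by
  have hx0 : 0 < p + (1-p)*t := by nlinarith
  have hx1 : p + (1-p)*t ≤ 1 := by nlinarith
  unfold Hf' Hf
  rw [Finset.mul_sum]
  refine Finset.sum_le_sum fun f _ => ?_
  have hw := w_nonneg p hp0.le hp1.le f
  have htz : (0:ℝ) ≤ t ^ Zh i f := by positivity
  rcases Nat.eq_zero_or_pos (Yh i f) with hY | hY
  · rw [hY]
    simp only [pow_zero, Nat.zero_sub]
    calc (p + (1-p)*t) * (w p f * (1 * t ^ Zh i f))
        ≤ 1 * (w p f * (1 * t ^ Zh i f)) := by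
          refine mul_le_mul_of_nonneg_right hx1 (by positivity)
      _ = w p f * (1 * t ^ Zh i f) := by ring
  · have : (p + (1-p)*t) * (p + (1-p)*t) ^ (Yh i f - 1) = (p + (1-p)*t) ^ Yh i f := by
      rw [← pow_succ']
      congr 1
      omega
    refine le_of_eq ?_
    rw [← this]
    ring

-- nonnegativity of the sums
lemma Gf_nonneg (hp0 : 0 < p) (hp1 : p < 1) (ht0 : 0 < t) (i : Fin N) : 0 ≤ Gf N p t i :=
  Finset.sum_nonneg fun f _ => mul_nonneg (w_nonneg p hp0.le hp1.le f) (by positivity)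

lemma Hf_nonneg (hp0 : 0 < p) (hp1 : p < 1) (ht0 : 0 < t) (i : Fin N) : 0 ≤ Hf N p t i := by
  have hx0 : 0 < p + (1-p)*t := by nlinarith
  exact Finset.sum_nonneg fun f _ => mul_nonneg (w_nonneg p hp0.le hp1.le f) (by positivity)

lemma Hf'_nonneg (hp0 : 0 < p) (hp1 : p < 1) (ht0 : 0 < t) (i : Fin N) : 0 ≤ Hf' N p t i := by
  have hx0 : 0 < p + (1-p)*t := by nlinarith
  exact Finset.sum_nonneg fun f _ => mul_nonneg (w_nonneg p hp0.le hp1.le f) (by positivity)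

lemma Ff_pos (hp0 : 0 < p) (hp1 : p < 1) (ht0 : 0 < t) : 0 < Ff N p t :=
  Finset.sum_pos (fun f _ => mul_pos (w_pos p hp0 hp1 f) (by positivity)) univ_nonempty

/-- KEY per-row bound. -/
lemma key_row (hp0 : 0 < p) (hp1 : p < 1) (ht0 : 0 < t) (ht1 : t ≤ 1) (hN : 1 ≤ N) (i : Fin N) :
    (t * (1-p)^N - N * p * (1-p)^(2*N-1) * (1-t)) * Ff N p t
      ≤ t * ((1-p)^N * Gf N p t i) := by
  set x := p + (1-p)*t with hxdef
  have hx0 : 0 < x := by rw [hxdef]; nlinarith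
  have hx1 : x ≤ 1 := by rw [hxdef]; nlinarith
  have htx : t ≤ x := by rw [hxdef]; nlinarith
  have hq0 : (0:ℝ) < 1 - p := by linarith
  set A : ℝ := N * p * (1-t) * (1-p)^(N-1) with hAdef
  have hA0 : 0 ≤ A := by
    rw [hAdef]
    have h1t : (0:ℝ) ≤ 1 - t := by linarith
    have hqp : (0:ℝ) ≤ (1-p)^(N-1) := pow_nonneg (by linarith) _
    exact mul_nonneg (mul_nonneg (mul_nonneg (Nat.cast_nonneg N) hp0.le) h1t) hqp
  have hF := Ff_pos (N := N) hp0 hp1 ht0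
  have hG := Gf_nonneg hp0 hp1 ht0 i
  have hH := Hf_nonneg hp0 hp1 ht0 i
  have hH' := Hf'_nonneg hp0 hp1 ht0 i
  have hFH := F_le_H hp0 hp1 ht0 ht1 i
  -- G ≥ H - A * H'
  have hGH : Hf N p t i - A * Hf' N p t i ≤ Gf N p t i := by
    have h1 := H_sub_G hp0 hp1 ht0 ht1 i
    have h2 := K_le hp0 hp1 ht0 ht1 i
    have h3 : p * (1-t) * Kf N p t i ≤ p * (1-t) * (N * ((1-p)^(N-1) * Hf' N p t i)) := by
      refine mul_le_mul_of_nonneg_left h2 ?_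
      nlinarith
    have h4 : p * (1-t) * (N * ((1-p)^(N-1) * Hf' N p t i)) = A * Hf' N p t i := by
      rw [hAdef]; ring
    linarith
  have hxH := xH'_le_H hp0 hp1 ht0 ht1 i
  -- coefficient identity : q^N * A = N p q^{2N-1} (1-t)
  have hcoef : (1-p)^N * A = N * p * (1-p)^(2*N-1) * (1-t) := by
    rw [hAdef]
    have : (1-p)^N * (1-p)^(N-1) = (1-p)^(2*N-1) := by
      rw [← pow_add]
      congr 1
      omega
    calc (1-p)^N * (N * p * (1-t) * (1-p)^(N-1))
        = ((1-p)^N * (1-p)^(N-1)) * (N * p * (1-t)) := by ring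
      _ = (1-p)^(2*N-1) * (N * p * (1-t)) := by rw [this]
      _ = N * p * (1-p)^(2*N-1) * (1-t) := by ring
  -- main inequality : t * G ≥ (t - A) * F
  have hmain : (t - A) * Ff N p t ≤ t * Gf N p t i := by
    by_cases hAx : A ≤ x
    · -- x * G ≥ (x - A) * H  and  H ≥ F
      have h5 : A * (x * Hf' N p t i) ≤ A * Hf N p t i :=
        mul_le_mul_of_nonneg_left hxH hA0
      have h6 : x * (Hf N p t i - A * Hf' N p t i) ≤ x * Gf N p t i :=
        mul_le_mul_of_nonneg_left hGH hx0.le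
      have h7 : (x - A) * Hf N p t i ≤ x * Gf N p t i := by nlinarith
      have h8 : (x - A) * Ff N p t ≤ (x - A) * Hf N p t i :=
        mul_le_mul_of_nonneg_left hFH (by linarith)
      -- t*G ≥ (t/x)(x-A)F ≥ (t-A)F ; multiply out : x*(tG) ≥ t(x-A)F ≥ x(t-A)F
      have h9 : t * ((x - A) * Ff N p t) ≤ t * (x * Gf N p t i) :=
        mul_le_mul_of_nonneg_left (le_trans h8 h7) ht0.le
      have h10 : x * ((t - A) * Ff N p t) ≤ t * ((x - A) * Ff N p t) := by
        have hdiff : t * ((x - A) * Ff N p t) - x * ((t - A) * Ff N p t)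
            = A * (x - t) * Ff N p t := by ring
        have hpos : 0 ≤ A * (x - t) * Ff N p t :=
          mul_nonneg (mul_nonneg hA0 (by linarith)) hF.le
        linarith
      have h11 : x * ((t - A) * Ff N p t) ≤ x * (t * Gf N p t i) := by
        calc x * ((t - A) * Ff N p t) ≤ t * (x * Gf N p t i) := le_trans h10 h9
          _ = x * (t * Gf N p t i) := by ring
      exact le_of_mul_le_mul_left h11 hx0
    · have : t - A < 0 := by linarith
      have : (t - A) * Ff N p t ≤ 0 := mul_nonpos_of_nonpos_of_nonneg this.le hF.le
      have : 0 ≤ t * Gf N p t i := mul_nonneg ht0.le hG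
      linarith
  calc (t * (1-p)^N - N * p * (1-p)^(2*N-1) * (1-t)) * Ff N p t
      = (1-p)^N * ((t - A) * Ff N p t) := by rw [← hcoef]; ring
    _ ≤ (1-p)^N * (t * Gf N p t i) :=
        mul_le_mul_of_nonneg_left hmain (by positivity)
    _ = t * ((1-p)^N * Gf N p t i) := by ring

end Analytic

section Transpose

variable {N : ℕ} {p t : ℝ}

def trE (N : ℕ) : Om N ≃ Om N where
  toFun f := fun a => f (a.2, a.1)
  invFun f := fun a => f (a.2, a.1)
  left_inv f := rfl
  right_inv f := rfl

lemma w_trE (f : Om N) : w p (trE N f) = w p f := by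
  unfold w trE
  exact Equiv.prod_comp (Equiv.prodComm (Fin N) (Fin N))
    (fun a => if f a then p else (1-p))

lemma colZero_trE (j : Fin N) (f : Om N) : colZero j (trE N f) ↔ rowZero j f := by
  constructor
  · intro h j'
    exact h j'
  · intro h i'
    exact h i'

lemma rowZero_trE (i : Fin N) (f : Om N) : rowZero i (trE N f) ↔ colZero i f := by
  constructor
  · intro h j'
    exact h j'
  · intro h j'
    exact h j'

lemma nn_trE (f : Om N) : nn (trE N f) = nn f := by
  unfold nn nR nC
  rw [Nat.add_comm]
  congr 1

/-- KEY per-column bound, by transposition. -/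
lemma key_col (hp0 : 0 < p) (hp1 : p < 1) (ht0 : 0 < t) (ht1 : t ≤ 1) (hN : 1 ≤ N) (j : Fin N) :
    (t * (1-p)^N - N * p * (1-p)^(2*N-1) * (1-t)) * Ff N p t
      ≤ t * (∑ f : Om N, w p f * ((if colZero j f then 1 else 0) * t ^ (nn f - 1))) := by
  have htr : ∑ f : Om N, w p f * ((if colZero j f then 1 else 0) * t ^ (nn f - 1))
      = ∑ f : Om N, w p f * ((if rowZero j f then 1 else 0) * t ^ (nn f - 1)) := by
    rw [← Equiv.sum_comp (trE N)
      (fun f => w p f * ((if colZero j f then 1 else 0) * t ^ (nn f - 1)))]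
    refine Finset.sum_congr rfl fun f _ => ?_
    rw [w_trE, nn_trE, if_congr (colZero_trE j f) rfl rfl]
  rw [htr, cond_row j]
  exact key_row hp0 hp1 ht0 ht1 hN j

/-- The main derivative bound. -/
lemma deriv_bound (hp0 : 0 < p) (hp1 : p < 1) (ht0 : 0 < t) (ht1 : t ≤ 1) (hN : 1 ≤ N) :
    (t * (2*N*(1-p)^N) - (2*N^2*(1-p)^(2*N-1)*p) * (1-t)) * Ff N p t
      ≤ t * (∑ f : Om N, w p f * ((nn f : ℝ) * t ^ (nn f - 1))) := by
  have hper : ∀ f : Om N, w p f * ((nn f : ℝ) * t ^ (nn f - 1))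
      = (∑ i, w p f * ((if rowZero i f then 1 else 0) * t ^ (nn f - 1)))
        + ∑ j, w p f * ((if colZero j f then 1 else 0) * t ^ (nn f - 1)) := by
    intro f
    have hcast : (nn f : ℝ) = (∑ i, if rowZero i f then (1:ℝ) else 0)
        + ∑ j, if colZero j f then (1:ℝ) else 0 := by
      unfold nn nR nC
      push_cast
      rfl
    rw [hcast, add_mul, mul_add, Finset.sum_mul, Finset.sum_mul, Finset.mul_sum, Finset.mul_sum]
  have hsplit : ∑ f : Om N, w p f * ((nn f : ℝ) * t ^ (nn f - 1))
      = (∑ i, ∑ f : Om N, w p f * ((if rowZero i f then 1 else 0) * t ^ (nn f - 1)))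
        + ∑ j, ∑ f : Om N, w p f * ((if colZero j f then 1 else 0) * t ^ (nn f - 1)) := by
    calc ∑ f : Om N, w p f * ((nn f : ℝ) * t ^ (nn f - 1))
        = ∑ f : Om N, ((∑ i, w p f * ((if rowZero i f then 1 else 0) * t ^ (nn f - 1)))
            + ∑ j, w p f * ((if colZero j f then 1 else 0) * t ^ (nn f - 1))) :=
          Finset.sum_congr rfl fun f _ => hper f
      _ = (∑ f : Om N, ∑ i, w p f * ((if rowZero i f then 1 else 0) * t ^ (nn f - 1)))
            + ∑ f : Om N, ∑ j, w p f * ((if colZero j f then 1 else 0) * t ^ (nn f - 1)) :=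
          Finset.sum_add_distrib
      _ = _ := by
          have c1 : (∑ f : Om N, ∑ i, w p f * ((if rowZero i f then 1 else 0) * t ^ (nn f - 1)))
              = ∑ i, ∑ f : Om N, w p f * ((if rowZero i f then 1 else 0) * t ^ (nn f - 1)) :=
            Finset.sum_comm
          have c2 : (∑ f : Om N, ∑ j, w p f * ((if colZero j f then 1 else 0) * t ^ (nn f - 1)))
              = ∑ j, ∑ f : Om N, w p f * ((if colZero j f then 1 else 0) * t ^ (nn f - 1)) :=
            Finset.sum_comm
          rw [c1, c2]
  rw [hsplit, mul_add, Finset.mul_sum, Finset.mul_sum]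
  have h2 : (t * (2*N*(1-p)^N) - (2*N^2*(1-p)^(2*N-1)*p) * (1-t)) * Ff N p t
      = (∑ _i : Fin N, (t * (1-p)^N - N * p * (1-p)^(2*N-1) * (1-t)) * Ff N p t)
        + ∑ _j : Fin N, (t * (1-p)^N - N * p * (1-p)^(2*N-1) * (1-t)) * Ff N p t := by
    rw [Finset.sum_const, card_univ, Fintype.card_fin, nsmul_eq_mul]
    push_cast
    ring
  rw [h2]
  refine add_le_add (Finset.sum_le_sum fun i _ => ?_) (Finset.sum_le_sum fun j _ => ?_)
  · rw [cond_row i]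
    exact key_row hp0 hp1 ht0 ht1 hN i
  · exact key_col hp0 hp1 ht0 ht1 hN j

end Transpose

section Calculus

variable {N : ℕ} {p : ℝ}

lemma Ff_one : Ff N p 1 = 1 := by
  unfold Ff
  have h : ∑ f : Om N, w p f * (1:ℝ) ^ nn f = ∑ f : Om N, w p f :=
    Finset.sum_congr rfl fun f _ => by rw [one_pow, mul_one]
  rw [h, sum_w]

lemma hasDerivAt_Ff (x : ℝ) :
    HasDerivAt (fun u => Ff N p u) (∑ f : Om N, w p f * ((nn f : ℝ) * x ^ (nn f - 1))) x := by
  unfold Ff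
  exact HasDerivAt.fun_sum fun f _ => (hasDerivAt_pow (nn f) x).const_mul (w p f)

lemma real_bound (hp0 : 0 < p) (hp1 : p < 1) (hN : 1 ≤ N) :
    ∑ f ∈ univ.filter (fun f : Om N => nn f = 0), w p f
      ≤ Real.exp (-(2 * N * (1 - p)^N) +
          (2 * N^2 * (1 - p)^(2 * N - 1)) * p *
            Real.log (1 + (2 * N * (1 - p)^N) / ((2 * N^2 * (1 - p)^(2 * N - 1)) * p))) := by
  have hq0 : (0:ℝ) < 1 - p := by linarith
  have hN0 : (0:ℝ) < N := by exact_mod_cast hN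
  set m : ℝ := 2 * N * (1 - p)^N with hmdef
  set c : ℝ := 2 * N^2 * (1 - p)^(2 * N - 1) * p with hcdef
  have hm0 : 0 < m := by rw [hmdef]; positivity
  have hc0 : 0 < c := by rw [hcdef]; positivity
  have hmc0 : 0 < m + c := by linarith
  set t₀ : ℝ := c / (m + c) with ht₀def
  have ht00 : 0 < t₀ := div_pos hc0 hmc0
  have ht01 : t₀ < 1 := (div_lt_one hmc0).mpr (by linarith)
  set ψ : ℝ → ℝ := fun u => Real.log (Ff N p u) + m * (1 - u) + c * (Real.log u + (1 - u))
    with hψdef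
  -- monotonicity of ψ on [t₀, 1]
  have hFcont : Continuous (fun u : ℝ => Ff N p u) := by
    unfold Ff
    exact continuous_finset_sum _ fun f _ => continuous_const.mul (continuous_pow (nn f))
  have hψcont : ContinuousOn ψ (Set.Icc t₀ 1) := by
    refine ContinuousOn.add (ContinuousOn.add ?_ ?_) ?_
    · refine ContinuousOn.log hFcont.continuousOn fun u hu => ?_
      exact (Ff_pos hp0 hp1 (lt_of_lt_of_le ht00 hu.1)).ne'
    · exact (continuous_const.mul (continuous_const.sub continuous_id)).continuousOn
    · refine ContinuousOn.mul continuousOn_const (ContinuousOn.add ?_ ?_)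
      · exact Real.continuousOn_log.mono fun u hu =>
          (ne_of_gt (lt_of_lt_of_le ht00 hu.1))
      · exact (continuous_const.sub continuous_id).continuousOn
  have hψderiv : ∀ x ∈ Set.Ioo t₀ (1:ℝ), HasDerivAt ψ
      ((∑ f : Om N, w p f * ((nn f : ℝ) * x ^ (nn f - 1))) / Ff N p x
        + m * (-1) + c * (x⁻¹ + (-1))) x := by
    intro x hx
    have hx0 : 0 < x := lt_trans ht00 hx.1
    have hFpos := Ff_pos (N := N) hp0 hp1 hx0
    have h1 : HasDerivAt (fun u => Real.log (Ff N p u))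
        ((∑ f : Om N, w p f * ((nn f : ℝ) * x ^ (nn f - 1))) / Ff N p x) x :=
      (hasDerivAt_Ff x).log hFpos.ne'
    have h2 : HasDerivAt (fun u : ℝ => m * (1 - u)) (m * (-1)) x := by
      have := ((hasDerivAt_id x).const_sub (1:ℝ)).const_mul m
      simpa using this
    have h3 : HasDerivAt (fun u : ℝ => c * (Real.log u + (1 - u))) (c * (x⁻¹ + (-1))) x := by
      have := ((Real.hasDerivAt_log hx0.ne').add ((hasDerivAt_id x).const_sub (1:ℝ))).const_mul c
      simpa using this
    exact (h1.add h2).add h3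
  have hψd : ∀ x ∈ Set.Ioo t₀ (1:ℝ), 0 ≤ deriv ψ x := by
    intro x hx
    rw [(hψderiv x hx).deriv]
    have hx0 : 0 < x := lt_trans ht00 hx.1
    have hx1 : x ≤ 1 := hx.2.le
    have hFpos := Ff_pos (N := N) hp0 hp1 hx0
    have hkey := deriv_bound (N := N) hp0 hp1 hx0 hx1 hN
    rw [← hmdef, ← hcdef] at hkey
    set S : ℝ := ∑ f : Om N, w p f * ((nn f : ℝ) * x ^ (nn f - 1)) with hSdef
    have heq : S / Ff N p x + m * (-1) + c * (x⁻¹ + (-1))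
        = (x * S - (x * m - c * (1-x)) * Ff N p x) / (x * Ff N p x) := by
      field_simp
      ring
    rw [heq]
    exact div_nonneg (by linarith) (by positivity)
  have hmono : MonotoneOn ψ (Set.Icc t₀ 1) := by
    refine monotoneOn_of_deriv_nonneg (convex_Icc t₀ 1) hψcont ?_ ?_
    · intro x hx
      rw [interior_Icc] at hx
      exact ((hψderiv x hx).differentiableAt).differentiableWithinAt
    · intro x hx
      rw [interior_Icc] at hx
      exact hψd x hx
  have hψle : ψ t₀ ≤ ψ 1 :=
    hmono (Set.mem_Icc.mpr ⟨le_refl _, ht01.le⟩) (Set.mem_Icc.mpr ⟨ht01.le, le_refl _⟩) ht01.le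
  have hψ1 : ψ 1 = 0 := by
    rw [hψdef]
    simp [Ff_one, Real.log_one]
  -- algebra for the final exponent
  have hexp : -(m * (1 - t₀)) - c * (Real.log t₀ + (1 - t₀))
      = -m + c * Real.log (1 + m / c) := by
    have h1t : 1 - t₀ = m / (m + c) := by
      rw [ht₀def]
      field_simp
      ring
    have hlt : Real.log t₀ = Real.log c - Real.log (m + c) :=
      Real.log_div hc0.ne' hmc0.ne'
    have hl2 : Real.log (1 + m / c) = Real.log (m + c) - Real.log c := by
      rw [show 1 + m / c = (m + c) / c by field_simp; ring]
      exact Real.log_div hmc0.ne' hc0.ne'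
    rw [h1t, hlt, hl2]
    field_simp
    ring
  have hlogF : Real.log (Ff N p t₀) ≤ -m + c * Real.log (1 + m / c) := by
    rw [← hexp]
    have := hψle
    rw [hψ1, hψdef] at this
    simp only at this
    linarith
  have hFt₀ : Ff N p t₀ ≤ Real.exp (-m + c * Real.log (1 + m / c)) := by
    rw [← Real.exp_log (Ff_pos (N := N) hp0 hp1 ht00)]
    exact Real.exp_le_exp.mpr hlogF
  have hPF : ∑ f ∈ univ.filter (fun f : Om N => nn f = 0), w p f ≤ Ff N p t₀ := by
    rw [Finset.sum_filter]
    unfold Ff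
    refine Finset.sum_le_sum fun f _ => ?_
    by_cases h : nn f = 0
    · rw [if_pos h, h, pow_zero, mul_one]
    · rw [if_neg h]
      exact mul_nonneg (w_nonneg p hp0.le hp1.le f) (by positivity)
  refine le_trans (le_trans hPF hFt₀) (le_of_eq ?_)
  congr 1

end Calculus

lemma isoCount_eq {N : ℕ} (f : Om N) : isoCount f = (nn f : ℝ) := by
  have hcast : (nn f : ℝ) = (∑ i, if rowZero i f then (1:ℝ) else 0)
      + ∑ j, if colZero j f then (1:ℝ) else 0 := by
    unfold nn nR nC
    push_cast
    rfl
  rw [hcast]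
  unfold isoCount
  rw [Fintype.sum_sum_type]
  congr 1
  · refine Finset.sum_congr rfl fun i _ => ?_
    refine if_congr ?_ rfl rfl
    constructor
    · intro h j
      have := h (Sum.inr j)
      simpa [adjB] using this
    · intro h v
      cases v with
      | inl i' => simp [adjB]
      | inr j => simp [adjB, h j]
  · refine Finset.sum_congr rfl fun j _ => ?_
    refine if_congr ?_ rfl rfl
    constructor
    · intro h i
      have := h (Sum.inl i)
      simpa [adjB] using this
    · intro h v
      cases v with
      | inl i => simp [adjB, h i]
      | inr j' => simp [adjB]

lemma measure_eval {N : ℕ} {p : ℝ} (hp0 : 0 < p) (hp1 : p < 1) :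
    productBernoulli (Fin N × Fin N) p {f | isoCount f = 0}
      = ENNReal.ofReal (∑ f ∈ univ.filter (fun f : Om N => nn f = 0), w p f) := by
  have hmeas : MeasurableSet {f : Fin N × Fin N → Bool | isoCount f = 0} :=
    MeasurableSet.of_discrete
  unfold productBernoulli
  rw [MeasureTheory.Measure.finset_sum_apply]
  have hterm : ∀ f : Om N,
      ((∏ a, if f a then ENNReal.ofReal p else ENNReal.ofReal (1 - p)) •
        MeasureTheory.Measure.dirac f) {g | isoCount g = 0}
      = ENNReal.ofReal (if nn f = 0 then w p f else 0) := by
    intro f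
    rw [MeasureTheory.Measure.smul_apply, smul_eq_mul,
      MeasureTheory.Measure.dirac_apply' f hmeas]
    have hprod : (∏ a, if f a then ENNReal.ofReal p else ENNReal.ofReal (1 - p))
        = ENNReal.ofReal (w p f) := by
      unfold w
      rw [ENNReal.ofReal_prod_of_nonneg (fun a _ => by split_ifs <;> linarith)]
      exact Finset.prod_congr rfl fun a _ => by split_ifs <;> rfl
    rw [hprod]
    have hmem : (f ∈ {g : Om N | isoCount g = 0}) ↔ nn f = 0 := by
      simp only [Set.mem_setOf_eq, isoCount_eq]
      exact_mod_cast Nat.cast_eq_zero (R := ℝ)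
    rw [Set.indicator_apply]
    by_cases h : nn f = 0
    · rw [if_pos (hmem.mpr h), if_pos h]
      simp
    · rw [if_neg (fun hc => h (hmem.mp hc)), if_neg h]
      simp
  rw [Finset.sum_congr rfl fun f _ => hterm f]
  rw [← ENNReal.ofReal_sum_of_nonneg (fun f _ => by
    split_ifs with h
    · exact w_nonneg p hp0.le hp1.le f
    · exact le_refl 0)]
  rw [← Finset.sum_filter]

end JansonBip

theorem prob_no_isolated_upper (N : ℕ) (p : ℝ) (hp0 : 0 < p) (hp1 : p < 1) :
    productBernoulli (Fin N × Fin N) p {f | isoCount f = 0} ≤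
      ENNReal.ofReal (Real.exp (-(2 * N * (1 - p)^N) +
        (2 * N^2 * (1 - p)^(2 * N - 1)) * p *
          Real.log (1 + (2 * N * (1 - p)^N) / ((2 * N^2 * (1 - p)^(2 * N - 1)) * p)))) := by
  rcases Nat.eq_zero_or_pos N with hN | hN
  · subst hN
    rw [JansonBip.measure_eval hp0 hp1]
    refine le_trans (ENNReal.ofReal_le_ofReal ?_) (le_refl _)
    have h1 : ∑ f ∈ univ.filter (fun f : JansonBip.Om 0 => JansonBip.nn f = 0),
        JansonBip.w p f ≤ 1 := by
      rw [← JansonBip.sum_w (N := 0) p]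
      refine Finset.sum_le_sum_of_subset_of_nonneg (Finset.filter_subset _ _)
        fun f _ _ => JansonBip.w_nonneg p hp0.le hp1.le f
    have h2 : Real.exp (-(2 * (0:ℕ) * (1 - p)^(0:ℕ)) +
        (2 * (0:ℕ)^2 * (1 - p)^(2 * 0 - 1)) * p *
          Real.log (1 + (2 * (0:ℕ) * (1 - p)^(0:ℕ)) / ((2 * (0:ℕ)^2 * (1 - p)^(2 * 0 - 1)) * p)))
        = 1 := by
      norm_num
    calc ∑ f ∈ univ.filter (fun f : JansonBip.Om 0 => JansonBip.nn f = 0), JansonBip.w p f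
        ≤ 1 := h1
      _ = _ := h2.symm
  · rw [JansonBip.measure_eval hp0 hp1]
    exact ENNReal.ofReal_le_ofReal (JansonBip.real_bound hp0 hp1 hN)
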